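/- Let 2 < q < p < 2^* and fix S > 0. The relation between the two Rayleigh quotients holds: μ^S(u) = C_{p,q,N,S} B(u)^{(2^*-p)/(2^*-q)} T(u)^{2^*(p-q)/(2(2^*-q))}/A(u) equals min_{s>0} M^S(su), where M^S(v) = ((c_N^S/2)T(v)^{N/(N-2)} + (1/q)B(v))/((1/p)A(v)) and C_{p,q,N,S} = c(p,q,N)/S^{2(p-q)/((2^*-q)(N-2))} with c(p,q,N) = ((N-2)/N^{N/(N-2)} · q(2^*-p)/(2(p-q)))^{(p-q)/(2^*-q)} · p(2^*-q)/(q(2^*-p)). Consequently inf_{u≠0} μ^S(u) = inf_{u≠0} M^S(u). -/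

import Mathlib

open Real

private lemma log_eq_imp {x y : ℝ} (hx : 0 < x) (hy : 0 < y)
    (h : Real.log x = Real.log y) : x = y := by
  rw [← Real.exp_log hx, ← Real.exp_log hy, h]

private lemma amgm {a b t : ℝ} (ha : 0 < a) (hb : 0 < b) (ht : 0 < t) :
    1 ≤ b / (a + b) * t ^ a + a / (a + b) * t ^ (-b) := by
  have hab : 0 < a + b := by linarith
  have h := Real.geom_mean_le_arith_mean2_weighted
    (div_nonneg hb.le hab.le) (div_nonneg ha.le hab.le)
    (Real.rpow_nonneg ht.le a) (Real.rpow_nonneg ht.le (-b))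
    (by field_simp; ring)
  calc (1:ℝ) = (t ^ a) ^ (b / (a + b)) * (t ^ (-b)) ^ (a / (a + b)) := by
        rw [← Real.rpow_mul ht.le, ← Real.rpow_mul ht.le, ← Real.rpow_add ht,
          show a * (b / (a + b)) + -b * (a / (a + b)) = 0 by field_simp; ring,
          Real.rpow_zero]
    _ ≤ _ := h
set_option maxHeartbeats 1000000 in
theorem stmt19 (N : ℕ) (hN : 3 ≤ N) (p q S : ℝ)
    (hq : 2 < q) (hqp : q < p) (hp : p < 2 * (N : ℝ) / ((N : ℝ) - 2)) (hS : 0 < S)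
    {I : Type*} [Nonempty I] (T A B : I → ℝ)
    (hT : ∀ i, 0 < T i) (hA : ∀ i, 0 < A i) (hB : ∀ i, 0 < B i)
    (hscale : ∀ i : I, ∀ s : ℝ, 0 < s →
      ∃ j : I, T j = s ^ 2 * T i ∧ A j = s ^ p * A i ∧ B j = s ^ q * B i)
    (twostar cN cpq Cc : ℝ)
    (h2s : twostar = 2 * (N : ℝ) / ((N : ℝ) - 2))
    (hcN : cN = ((N : ℝ) - 2) / ((N : ℝ) ^ ((N : ℝ) / ((N : ℝ) - 2)) * S ^ ((2 : ℝ) / ((N : ℝ) - 2))))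
    (hcpq : cpq = cN * q * (twostar - p) / (2 * (p - q)))
    (hCc : Cc = ((((N : ℝ) - 2) / (N : ℝ) ^ ((N : ℝ) / ((N : ℝ) - 2)))
          * (q * (twostar - p) / (2 * (p - q)))) ^ ((p - q) / (twostar - q))
        * (p * (twostar - q) / (q * (twostar - p)))
        / S ^ (2 * (p - q) / ((twostar - q) * ((N : ℝ) - 2))))
    (muq Mq : I → ℝ)
    (hmuq : muq = fun i => Cc * (B i) ^ ((twostar - p) / (twostar - q))
        * (T i) ^ (twostar * (p - q) / (2 * (twostar - q))) / A i)
    (hMq : Mq = fun i =>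
        (cN / 2 * (T i) ^ ((N : ℝ) / ((N : ℝ) - 2)) + (1 / q) * B i) / ((1 / p) * A i))
    (Mfib : I → ℝ → ℝ)
    (hMfib : Mfib = fun i s =>
        (cN / 2 * (s ^ 2 * T i) ^ ((N : ℝ) / ((N : ℝ) - 2)) + (1 / q) * (s ^ q * B i))
          / ((1 / p) * (s ^ p * A i))) :
    (∀ i : I, (∀ s : ℝ, 0 < s → muq i ≤ Mfib i s) ∧
      (let s0 := (B i / (cpq * (T i) ^ ((N : ℝ) / ((N : ℝ) - 2)))) ^ ((1 : ℝ) / (twostar - q));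
        0 < s0 ∧ Mfib i s0 = muq i)) ∧
    sInf (Set.range muq) = sInf (Set.range Mq) := by
  have hN3 : (3:ℝ) ≤ (N:ℝ) := by exact_mod_cast hN
  have hN2 : (0:ℝ) < (N:ℝ) - 2 := by linarith
  have hNpos : (0:ℝ) < (N:ℝ) := by linarith
  have hts : p < twostar := h2s ▸ hp
  have hq0 : 0 < q := by linarith
  have hp0 : 0 < p := by linarith
  have ha : 0 < twostar - p := by linarith
  have hb : 0 < p - q := by linarith
  set ν : ℝ := (N:ℝ) / ((N:ℝ) - 2) with hν
  have hν0 : 0 < ν := div_pos hNpos hN2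
  have h2ν : twostar = 2 * ν := by rw [h2s, hν]; ring
  set dd : ℝ := (N:ℝ) - 2 with hdd
  set aa : ℝ := twostar - p with haa
  set bb : ℝ := p - q with hbb
  have hsub : twostar - q = aa + bb := by rw [haa, hbb]; ring
  rw [hsub] at hCc hmuq ⊢
  have hab : 0 < aa + bb := by positivity
  have hNν : 0 < (N:ℝ) ^ ν := Real.rpow_pos_of_pos hNpos ν
  have hSpow : 0 < S ^ ((2:ℝ) / dd) := Real.rpow_pos_of_pos hS _
  have hcN0 : 0 < cN := by rw [hcN]; positivity
  have hcpq0 : 0 < cpq := by rw [hcpq]; positivity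
  have hexp : twostar * bb / (2 * (aa + bb)) = ν * (bb / (aa + bb)) := by
    rw [h2ν]; field_simp
  -- the key constant identity
  have hCc' : Cc = p * (aa + bb) / (q * aa) * cpq ^ (bb / (aa + bb)) := by
    apply log_eq_imp (by rw [hCc]; positivity) (by positivity)
    rw [hCc, hcpq, hcN]
    simp (disch := positivity) only [Real.log_div, Real.log_mul, Real.log_rpow,
      Real.log_inv]
    field_simp
    ring
  have hCc0 : 0 < Cc := by rw [hCc']; positivity
  have hcN' : cN = cpq * (2 * bb) / (q * aa) := by
    rw [hcpq]; field_simp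
  have hmuqpos : ∀ i, 0 < muq i := by
    intro i
    rw [hmuq]
    exact div_pos (mul_pos (mul_pos hCc0 (Real.rpow_pos_of_pos (hB i) _))
      (Real.rpow_pos_of_pos (hT i) _)) (hA i)
  -- per-index analysis
  have main : ∀ i : I,
      (0 < (B i / (cpq * (T i) ^ ν)) ^ ((1 : ℝ) / (aa + bb))) ∧
      (∀ s : ℝ, 0 < s → Mfib i s = muq i *
        (bb / (aa + bb) * (s / ((B i / (cpq * (T i) ^ ν)) ^ ((1 : ℝ) / (aa + bb)))) ^ aa
          + aa / (aa + bb) * (s / ((B i / (cpq * (T i) ^ ν)) ^ ((1 : ℝ) / (aa + bb)))) ^ (-bb))) := by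
    intro i
    have hTi := hT i; have hAi := hA i; have hBi := hB i
    have hTν : 0 < T i ^ ν := Real.rpow_pos_of_pos hTi ν
    have hX0 : 0 < B i / (cpq * T i ^ ν) := by positivity
    set u : ℝ := (B i / (cpq * T i ^ ν)) ^ ((1:ℝ) / (aa + bb)) with hu
    have hu0 : 0 < u := Real.rpow_pos_of_pos hX0 _
    refine ⟨hu0, fun s hs => ?_⟩
    have hsp : 0 < s ^ p := Real.rpow_pos_of_pos hs p
    have hua : (0:ℝ) < u ^ aa := Real.rpow_pos_of_pos hu0 _
    have hub : (0:ℝ) < u ^ (-bb) := Real.rpow_pos_of_pos hu0 _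
    have hme : muq i = Cc * B i ^ (aa / (aa + bb))
        * T i ^ (twostar * bb / (2 * (aa + bb))) / A i := by rw [hmuq]
    have EQ1 : Mfib i s = (p / A i) * ((cN / 2 * T i ^ ν) * s ^ aa
        + ((1 / q) * B i) * s ^ (q - p)) := by
      rw [hMfib]
      have e1 : ((s:ℝ) ^ 2 * T i) ^ ν = s ^ twostar * T i ^ ν := by
        rw [Real.mul_rpow (by positivity) hTi.le]
        congr 1
        rw [← Real.rpow_natCast s 2, ← Real.rpow_mul hs.le, h2ν]
        norm_num
      have e2 : s ^ aa = s ^ twostar / s ^ p := by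
        rw [haa, Real.rpow_sub hs]
      have e3 : s ^ (q - p) = s ^ q / s ^ p := Real.rpow_sub hs _ _
      dsimp only
      rw [e1, e2, e3]
      field_simp
    have W1 : muq i * (bb / (aa + bb)) / u ^ aa
        = p / A i * (cN / 2 * T i ^ ν) := by
      apply log_eq_imp (div_pos (mul_pos (hmuqpos i) (by positivity)) hua)
        (by positivity)
      rw [hme, hexp, hCc', hcN', hu]
      simp (disch := positivity) only [Real.log_div, Real.log_mul, Real.log_rpow,
        Real.log_inv]
      field_simp
      ring
    have W2 : muq i * (aa / (aa + bb)) / u ^ (-bb)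
        = p / A i * (1 / q * B i) := by
      apply log_eq_imp (div_pos (mul_pos (hmuqpos i) (by positivity)) hub)
        (by positivity)
      rw [hme, hexp, hCc', hu]
      simp (disch := positivity) only [Real.log_div, Real.log_mul, Real.log_rpow,
        Real.log_inv, Real.log_one]
      field_simp
      ring
    rw [EQ1, show q - p = -bb by rw [hbb]; ring,
      Real.div_rpow hs.le hu0.le, Real.div_rpow hs.le hu0.le]
    linear_combination (-(s ^ aa)) * W1 - (s ^ (-bb)) * W2
  -- assemble part 1
  have part1 : ∀ i : I, (∀ s : ℝ, 0 < s → muq i ≤ Mfib i s) ∧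
      (let s0 := (B i / (cpq * (T i) ^ ν)) ^ ((1 : ℝ) / (aa + bb));
        0 < s0 ∧ Mfib i s0 = muq i) := by
    intro i
    obtain ⟨hu0, hkey⟩ := main i
    constructor
    · intro s hs
      rw [hkey s hs]
      nth_rewrite 1 [← mul_one (muq i)]
      exact mul_le_mul_of_nonneg_left (amgm ha hb (div_pos hs hu0)) (hmuqpos i).le
    · refine ⟨hu0, ?_⟩
      rw [hkey _ hu0, div_self hu0.ne', Real.one_rpow, Real.one_rpow,
        show bb / (aa + bb) * 1 + aa / (aa + bb) * 1 = 1 by field_simp; ring, mul_one]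
  refine ⟨part1, ?_⟩
  -- the infimum identity
  have hMqpos : ∀ i, 0 < Mq i := by
    intro i
    rw [hMq]
    exact div_pos (add_pos (mul_pos (by positivity) (Real.rpow_pos_of_pos (hT i) _))
      (mul_pos (by positivity) (hB i))) (mul_pos (by positivity) (hA i))
  have hbddmu : BddBelow (Set.range muq) := ⟨0, by rintro x ⟨i, rfl⟩; exact (hmuqpos i).le⟩
  have hbddMq : BddBelow (Set.range Mq) := ⟨0, by rintro x ⟨i, rfl⟩; exact (hMqpos i).le⟩
  have hMfib1 : ∀ i, Mfib i 1 = Mq i := by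
    intro i
    rw [hMfib, hMq]
    simp [Real.one_rpow]
  apply le_antisymm
  · refine le_csInf ⟨Mq (Classical.arbitrary I), Set.mem_range_self _⟩ ?_
    rintro b ⟨i, rfl⟩
    calc sInf (Set.range muq) ≤ muq i := csInf_le hbddmu ⟨i, rfl⟩
      _ ≤ Mfib i 1 := (part1 i).1 1 one_pos
      _ = Mq i := hMfib1 i
  · refine le_csInf ⟨muq (Classical.arbitrary I), Set.mem_range_self _⟩ ?_
    rintro b ⟨i, rfl⟩
    obtain ⟨hu0, heq⟩ := (part1 i).2
    obtain ⟨j, hTj, hAj, hBj⟩ := hscale i _ hu0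
    have hMqj : Mq j = Mfib i ((B i / (cpq * (T i) ^ ν)) ^ ((1:ℝ) / (aa + bb))) := by
      rw [hMq, hMfib]
      dsimp only
      rw [hTj, hAj, hBj]
    calc sInf (Set.range Mq) ≤ Mq j := csInf_le hbddMq ⟨j, rfl⟩
      _ = muq i := by rw [hMqj]; exact heq
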